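/- Let q ∈ O_F[X] be a polynomial of degree ≥ 1 with non-zero image q̄ ∈ K[X], let b ∈ F, and suppose a ∈ O_F satisfies q(a) = b and q̄′(ā) ≠ 0. Then for every integer A ≥ 1, {x ∈ O_F : x̄ = ā and q(x) ∈ b + t^A O_F} = a + t^A O_F, and the residue field approximation of q with respect to a + t^A O_F and b + t^A O_F (and representatives a, b) is ψ(X) = q̄′(ā)·X. -/

import Mathlib

noncomputable section

open Polynomial
open scoped Classical

/-- A Henselian discrete valuation field with residue field `K`:
`Fc` is the field, `O` its ring of integers, `t` a fixed prime element and `res` the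
residue map.  The axioms say that `O` is a valuation subring of `Fc`, `t` is irreducible
in `O`, `res` is surjective with kernel `tO`, the valuation is discrete (every nonzero
element is a unit of `O` times a power of `t`), and `O` is Henselian (simple roots of the
reduction of a monic polynomial lift). -/
structure HDVF (K : Type) [Field K] : Type 1 where
  Fc : Type
  fieldF : Field Fc
  O : Subring Fc
  t : Fc
  ht : t ∈ O
  res : O →+* K
  hval : ∀ x : Fc, x ∈ O ∨ x⁻¹ ∈ O
  hirr : Irreducible (⟨t, ht⟩ : O)
  hres_surj : Function.Surjective res
  hres_ker : ∀ x : O, res x = 0 ↔ (⟨t, ht⟩ : O) ∣ x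
  hdisc : ∀ x : Fc, x ≠ 0 → ∃ (n : ℤ) (u : O), IsUnit u ∧ x = (u : Fc) * t ^ n
  hensel : ∀ P : Polynomial O, P.Monic → ∀ α : K,
    Polynomial.eval α (P.map res) = 0 →
    Polynomial.eval α (Polynomial.derivative (P.map res)) ≠ 0 →
    ∃ a : O, Polynomial.eval a P = 0 ∧ res a = α

attribute [instance] HDVF.fieldF

namespace HDVF

variable {K : Type} [Field K] (E : HDVF K)

/-- The residue map, extended by zero outside the ring of integers. -/
def resF (x : E.Fc) : K := if h : x ∈ E.O then E.res ⟨x, h⟩ else 0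

/-- The translated fractional ideal `a + t^c O`. -/
def tfi (a : E.Fc) (c : ℤ) : Set E.Fc := {y : E.Fc | ∃ z ∈ E.O, y = a + E.t ^ c * z}

lemma t_ne_zero' : E.t ≠ 0 := fun h => E.hirr.ne_zero (Subtype.ext h)

lemma resF_coe (y : E.O) : E.resF (y : E.Fc) = E.res y := by
  unfold resF
  rw [dif_pos y.2]

lemma eval_subtype' (q : Polynomial E.O) (c : E.O) :
    Polynomial.eval (c : E.Fc) (q.map E.O.subtype) = ((Polynomial.eval c q : E.O) : E.Fc) := by
  rw [Polynomial.eval_map]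
  exact Polynomial.eval₂_at_apply E.O.subtype c

lemma res_tpow_mul (m : ℕ) (hm : 1 ≤ m) (z : E.O) :
    E.res ((⟨E.t, E.ht⟩ : E.O) ^ m * z) = 0 := by
  rw [E.hres_ker]
  exact Dvd.dvd.mul_right (dvd_pow_self _ (by omega)) z

lemma isUnit_of_res_ne_zero (y : E.O) (h : E.res y ≠ 0) : IsUnit y := by
  have hy0 : (y : E.Fc) ≠ 0 := by
    intro h0
    exact h (by rw [show y = 0 from Subtype.ext h0, map_zero])
  obtain ⟨n, u, hu, hyu⟩ := E.hdisc y hy0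
  have htd : ¬ ((⟨E.t, E.ht⟩ : E.O) ∣ y) := fun hd => h ((E.hres_ker y).2 hd)
  rcases lt_trichotomy n 0 with hn | hn | hn
  · exfalso
    set m := (-n).toNat with hm
    have hmn : (m : ℤ) = -n := Int.toNat_of_nonneg (by omega)
    have h1 : (u : E.Fc) = (y : E.Fc) * E.t ^ m := by
      rw [hyu, mul_assoc, ← zpow_natCast E.t, ← zpow_add₀ E.t_ne_zero', hmn]
      simp
    have h2 : u = y * (⟨E.t, E.ht⟩ : E.O) ^ m := by
      apply Subtype.ext; push_cast; exact h1
    have hdvd : (⟨E.t, E.ht⟩ : E.O) ∣ u := by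
      rw [h2]
      exact Dvd.dvd.mul_left (dvd_pow_self _ (by omega)) y
    exact E.hirr.not_isUnit (isUnit_of_dvd_unit hdvd hu)
  · have : y = u := Subtype.ext (by rw [hyu, hn]; simp)
    rw [this]; exact hu
  · exfalso
    apply htd
    set m := n.toNat with hm
    have hmn : (m : ℤ) = n := Int.toNat_of_nonneg (by omega)
    have h2 : y = u * (⟨E.t, E.ht⟩ : E.O) ^ m := by
      apply Subtype.ext
      push_cast
      rw [hyu, ← zpow_natCast E.t, hmn]
    rw [h2]
    exact Dvd.dvd.mul_left (dvd_pow_self _ (by omega)) u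

end HDVF

/-- If q ∈ O_F[X] has degree ≥ 1 and non-zero image in K[X], and
a ∈ O_F satisfies q(a) = b with q̄′(ā) ≠ 0, then for every A ≥ 1 the set
{x ∈ O_F : x̄ = ā, q(x) ∈ b + t^A O_F} equals a + t^A O_F, and the corresponding residue
field approximation is ψ(X) = q̄′(ā)·X. -/
theorem statement5 {K : Type} [Field K] [Infinite K] (E : HDVF K)
    (q : Polynomial E.O) (hdeg : 1 ≤ q.natDegree) (hqbar : q.map E.res ≠ 0)
    (b : E.Fc) (a : E.O)
    (hroot : Polynomial.eval (a : E.Fc) (q.map E.O.subtype) = b)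
    (hsimple : Polynomial.eval (E.res a) (Polynomial.derivative (q.map E.res)) ≠ 0)
    (A : ℤ) (hA : 1 ≤ A) :
    ({x : E.Fc | x ∈ E.O ∧ E.resF x = E.res a ∧
        Polynomial.eval x (q.map E.O.subtype) ∈ E.tfi b A} = E.tfi (a : E.Fc) A) ∧
    ∀ x ∈ E.O,
      E.resF ((Polynomial.eval ((a : E.Fc) + E.t ^ A * x) (q.map E.O.subtype) - b) *
          E.t ^ (-A)) =
        Polynomial.eval (E.resF x)
          (Polynomial.C (Polynomial.eval (E.res a) (Polynomial.derivative (q.map E.res))) *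
            Polynomial.X) := by
  classical
  set tO : E.O := ⟨E.t, E.ht⟩ with htO
  set T : E.O := tO ^ A.toNat with hT
  have hAn : ((A.toNat : ℤ)) = A := Int.toNat_of_nonneg (by omega)
  have hTpow : (T : E.Fc) = E.t ^ A := by
    rw [← hAn, zpow_natCast, hT]
    push_cast
    rfl
  have hAm : 1 ≤ A.toNat := by omega
  have hd : Polynomial.eval (E.res a) (Polynomial.derivative (q.map E.res))
      = E.res (Polynomial.eval a (Polynomial.derivative q)) := by
    rw [Polynomial.derivative_map, Polynomial.eval_map, Polynomial.eval₂_at_apply]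
  have hb : ((Polynomial.eval a q : E.O) : E.Fc) = b := by
    rw [← E.eval_subtype' q a, hroot]
  have tpow_ne : E.t ^ A ≠ 0 := zpow_ne_zero A E.t_ne_zero'
  -- core Taylor computation
  have core : ∀ x : E.O, ∃ w : E.O,
      Polynomial.eval (a + T * x) q = Polynomial.eval a q + T * w ∧
      E.res w = E.res (Polynomial.eval a (Polynomial.derivative q)) * E.res x := by
    intro x
    obtain ⟨k, hk⟩ := q.binomExpansion a (T * x)
    refine ⟨Polynomial.eval a (Polynomial.derivative q) * x + k * (T * x ^ 2), ?_, ?_⟩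
    · rw [hk]; ring
    · rw [map_add, map_mul, map_mul, E.res_tpow_mul A.toNat hAm (x ^ 2), mul_zero, add_zero]
  constructor
  · ext y
    constructor
    · rintro ⟨hy, hres, z, hz, hqz⟩
      set yO : E.O := ⟨y, hy⟩ with hyO
      set h : E.O := yO - a with hh
      have hresh : E.res h = 0 := by
        have : E.res yO = E.res a := by
          rw [← E.resF_coe yO]; exact hres
        rw [hh, map_sub, this, sub_self]
      obtain ⟨k, hk⟩ := q.binomExpansion a h
      set u : E.O := Polynomial.eval a (Polynomial.derivative q) + k * h with hu
      have hqy : Polynomial.eval yO q = Polynomial.eval a q + h * u := by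
        have : a + h = yO := by rw [hh]; ring
        rw [← this, hk, hu]; ring
      have hcoe : ((Polynomial.eval yO q : E.O) : E.Fc) = b + E.t ^ A * z := by
        rw [← E.eval_subtype' q yO]; exact hqz
      have hzO : E.O := ⟨z, hz⟩
      have heq : h * u = T * ⟨z, hz⟩ := by
        apply Subtype.ext
        push_cast
        rw [hTpow]
        have := hcoe
        rw [hqy] at this
        push_cast at this
        rw [hb] at this
        linear_combination this
      have hresu : E.res u ≠ 0 := by
        rw [hu, map_add, map_mul, hresh, mul_zero, add_zero, ← hd]
        exact hsimple
      obtain ⟨v, hv⟩ := E.isUnit_of_res_ne_zero u hresu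
      have hinv : h = T * (⟨z, hz⟩ * ↑v⁻¹) := by
        have : h * u * ↑v⁻¹ = T * ⟨z, hz⟩ * ↑v⁻¹ := by rw [heq]
        calc h = h * u * ↑v⁻¹ := by
                rw [← hv]
                rw [mul_assoc, Units.mul_inv, mul_one]
             _ = T * (⟨z, hz⟩ * ↑v⁻¹) := by rw [heq]; ring
      refine ⟨((⟨z, hz⟩ * ↑v⁻¹ : E.O) : E.Fc), (⟨z, hz⟩ * ↑v⁻¹ : E.O).2, ?_⟩
      have : y = ((a + h : E.O) : E.Fc) := by
        push_cast [hh]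
        ring
      rw [this, hinv]
      push_cast
      rw [hTpow]
    · rintro ⟨z, hz, rfl⟩
      obtain ⟨w, hw, hwres⟩ := core ⟨z, hz⟩
      have hymem : (a : E.Fc) + E.t ^ A * z = ((a + T * ⟨z, hz⟩ : E.O) : E.Fc) := by
        push_cast
        rw [hTpow]
      refine ⟨by rw [hymem]; exact (a + T * ⟨z, hz⟩ : E.O).2, ?_, ?_⟩
      · have h0 : E.res (T * ⟨z, hz⟩) = 0 := E.res_tpow_mul A.toNat hAm _
        rw [hymem, E.resF_coe, map_add, h0, add_zero]
      · refine ⟨((w : E.O) : E.Fc), w.2, ?_⟩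
        rw [hymem, E.eval_subtype' q, hw]
        push_cast
        rw [hb, hTpow]
  · intro x hx
    obtain ⟨w, hw, hwres⟩ := core ⟨x, hx⟩
    have hymem : (a : E.Fc) + E.t ^ A * x = ((a + T * ⟨x, hx⟩ : E.O) : E.Fc) := by
      push_cast
      rw [hTpow]
    have hval : (Polynomial.eval ((a : E.Fc) + E.t ^ A * x) (q.map E.O.subtype) - b) *
        E.t ^ (-A) = ((w : E.O) : E.Fc) := by
      rw [hymem, E.eval_subtype' q, hw]
      push_cast
      rw [hb, hTpow]
      rw [add_sub_cancel_left, mul_right_comm, zpow_neg, mul_inv_cancel₀ tpow_ne, one_mul]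
    rw [hval, E.resF_coe, hwres]
    have hxr : E.resF x = E.res ⟨x, hx⟩ := by
      unfold HDVF.resF
      rw [dif_pos hx]
    rw [hxr, hd, Polynomial.eval_mul, Polynomial.eval_C, Polynomial.eval_X]
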